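/- Let n ≥ 2 and let W = (w_{ij}) be a symmetric n×n real matrix with w_{ij} > 0 for all i ≠ j. Then for every symmetric n×n real matrix S = (s_{ij}) one has L_W(S) ≥ H(W), and equality holds if and only if there exists a constant c ∈ ℝ such that s_{ij} = log(w_{ij}) + c for all i ≠ j. -/

import Mathlib

open scoped BigOperators

/-- The weighted InfoNCE loss. -/
noncomputable def infoNCE {n : ℕ} (W S : Matrix (Fin n) (Fin n) ℝ) : ℝ :=
  -(1 / (n : ℝ)) * ∑ i : Fin n, ∑ j ∈ Finset.univ.erase i,
    (W i j / ∑ k ∈ Finset.univ.erase i, W i k) *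
      Real.log (Real.exp (S i j) / ∑ k ∈ Finset.univ.erase i, Real.exp (S i k))

/-- The entropic lower bound (with the convention `0 * log 0 = 0`,
which holds automatically since `Real.log 0 = 0`). -/
noncomputable def entropicBound {n : ℕ} (W : Matrix (Fin n) (Fin n) ℝ) : ℝ :=
  -(1 / (n : ℝ)) * ∑ i : Fin n, ∑ j ∈ Finset.univ.erase i,
    (W i j / ∑ k ∈ Finset.univ.erase i, W i k) *
      Real.log (W i j / ∑ k ∈ Finset.univ.erase i, W i k)

/-- Gibbs' inequality with equality case. -/
lemma gibbs_aux {ι : Type*} (s : Finset ι) (p q : ι → ℝ)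
    (hp : ∀ i ∈ s, 0 < p i) (hq : ∀ i ∈ s, 0 < q i)
    (h1 : ∑ i ∈ s, p i = 1) (h2 : ∑ i ∈ s, q i = 1) :
    (∑ i ∈ s, p i * Real.log (q i) ≤ ∑ i ∈ s, p i * Real.log (p i)) ∧
    ((∑ i ∈ s, p i * Real.log (q i) = ∑ i ∈ s, p i * Real.log (p i)) ↔
      ∀ i ∈ s, q i = p i) := by
  have key : ∀ i ∈ s, p i * Real.log (q i) - p i * Real.log (p i) ≤ q i - p i := by
    intro i hi
    have hpi := hp i hi
    have hqi := hq i hi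
    have hx : 0 < q i / p i := div_pos hqi hpi
    have := Real.log_le_sub_one_of_pos hx
    have hlog : Real.log (q i / p i) = Real.log (q i) - Real.log (p i) :=
      Real.log_div hqi.ne' hpi.ne'
    rw [hlog] at this
    have := mul_le_mul_of_nonneg_left this hpi.le
    calc p i * Real.log (q i) - p i * Real.log (p i)
        = p i * (Real.log (q i) - Real.log (p i)) := by ring
      _ ≤ p i * (q i / p i - 1) := this
      _ = q i - p i := by field_simp
  have hstrict : ∀ i ∈ s, q i ≠ p i →
      p i * Real.log (q i) - p i * Real.log (p i) < q i - p i := by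
    intro i hi hne
    have hpi := hp i hi
    have hqi := hq i hi
    have hx : 0 < q i / p i := div_pos hqi hpi
    have hne1 : q i / p i ≠ 1 := by
      intro h
      exact hne (by field_simp at h; linarith)
    have := Real.log_lt_sub_one_of_pos hx hne1
    have hlog : Real.log (q i / p i) = Real.log (q i) - Real.log (p i) :=
      Real.log_div hqi.ne' hpi.ne'
    rw [hlog] at this
    have := mul_lt_mul_of_pos_left this hpi
    calc p i * Real.log (q i) - p i * Real.log (p i)
        = p i * (Real.log (q i) - Real.log (p i)) := by ring
      _ < p i * (q i / p i - 1) := this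
      _ = q i - p i := by field_simp
  have hsum : ∑ i ∈ s, (p i * Real.log (q i) - p i * Real.log (p i)) ≤
      ∑ i ∈ s, (q i - p i) := Finset.sum_le_sum key
  have hzero : ∑ i ∈ s, (q i - p i) = 0 := by
    rw [Finset.sum_sub_distrib, h1, h2]; ring
  have hle : ∑ i ∈ s, p i * Real.log (q i) ≤ ∑ i ∈ s, p i * Real.log (p i) := by
    rw [Finset.sum_sub_distrib] at hsum
    linarith [hsum, hzero]
  refine ⟨hle, ?_, ?_⟩
  · intro heq i hi
    by_contra hne
    have hlt : ∑ j ∈ s, (p j * Real.log (q j) - p j * Real.log (p j)) <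
        ∑ j ∈ s, (q j - p j) := by
      apply Finset.sum_lt_sum key ⟨i, hi, hstrict i hi hne⟩
    rw [Finset.sum_sub_distrib, hzero, heq] at hlt
    linarith
  · intro h
    apply Finset.sum_congr rfl
    intro i hi
    rw [h i hi]

/-- entropic lower bound for the weighted InfoNCE loss, with
equality iff `S` equals `log W` plus a constant off the diagonal. -/
theorem statement0 {n : ℕ} (hn : 2 ≤ n) (W : Matrix (Fin n) (Fin n) ℝ)
    (hWsymm : W.IsSymm) (hWpos : ∀ i j : Fin n, i ≠ j → 0 < W i j)
    (S : Matrix (Fin n) (Fin n) ℝ) (hSsymm : S.IsSymm) :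
    entropicBound W ≤ infoNCE W S ∧
      (infoNCE W S = entropicBound W ↔
        ∃ c : ℝ, ∀ i j : Fin n, i ≠ j → S i j = Real.log (W i j) + c) := by
  classical
  have hWs : ∀ i j, W j i = W i j := fun i j =>
    congrFun (congrFun hWsymm.eq i) j
  have hSs : ∀ i j, S j i = S i j := fun i j =>
    congrFun (congrFun hSsymm.eq i) j
  set A : Fin n → ℝ := fun i => ∑ k ∈ Finset.univ.erase i, W i k with hA
  set Z : Fin n → ℝ := fun i => ∑ k ∈ Finset.univ.erase i, Real.exp (S i k) with hZ
  have hne : ∀ i : Fin n, (Finset.univ.erase i).Nonempty := by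
    intro i
    have : 1 < (Finset.univ : Finset (Fin n)).card := by
      simp; omega
    obtain ⟨j, hj, hji⟩ := Finset.exists_mem_ne this i
    exact ⟨j, Finset.mem_erase.2 ⟨hji, hj⟩⟩
  have hApos : ∀ i, 0 < A i := by
    intro i
    apply Finset.sum_pos
    · intro k hk
      exact hWpos i k (Ne.symm (Finset.mem_erase.1 hk).1)
    · exact hne i
  have hZpos : ∀ i, 0 < Z i := by
    intro i
    apply Finset.sum_pos (fun k _ => Real.exp_pos _) (hne i)
  set p : Fin n → Fin n → ℝ := fun i j => W i j / A i with hp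
  set q : Fin n → Fin n → ℝ := fun i j => Real.exp (S i j) / Z i with hq
  have hppos : ∀ i, ∀ j ∈ Finset.univ.erase i, 0 < p i j := by
    intro i j hj
    exact div_pos (hWpos i j (Ne.symm (Finset.mem_erase.1 hj).1)) (hApos i)
  have hqpos : ∀ i, ∀ j ∈ Finset.univ.erase i, 0 < q i j :=
    fun i j _ => div_pos (Real.exp_pos _) (hZpos i)
  have hpsum : ∀ i, ∑ j ∈ Finset.univ.erase i, p i j = 1 := by
    intro i
    simp only [hp, ← Finset.sum_div]
    exact div_self (hApos i).ne'
  have hqsum : ∀ i, ∑ j ∈ Finset.univ.erase i, q i j = 1 := by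
    intro i
    simp only [hq, ← Finset.sum_div]
    exact div_self (hZpos i).ne'
  have hgibbs := fun i => gibbs_aux (Finset.univ.erase i) (p i) (q i)
    (hppos i) (hqpos i) (hpsum i) (hqsum i)
  -- identify infoNCE / entropicBound with sums of p * log q, p * log p
  have hinfo : infoNCE W S = -(1 / (n : ℝ)) * ∑ i : Fin n,
      ∑ j ∈ Finset.univ.erase i, p i j * Real.log (q i j) := rfl
  have hent : entropicBound W = -(1 / (n : ℝ)) * ∑ i : Fin n,
      ∑ j ∈ Finset.univ.erase i, p i j * Real.log (p i j) := rfl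
  set F : Fin n → ℝ := fun i => ∑ j ∈ Finset.univ.erase i, p i j * Real.log (q i j)
  set G : Fin n → ℝ := fun i => ∑ j ∈ Finset.univ.erase i, p i j * Real.log (p i j)
  have hFG : ∀ i, F i ≤ G i := fun i => (hgibbs i).1
  have hnpos : (0 : ℝ) < (n : ℝ) := by positivity
  have hsumFG : ∑ i, F i ≤ ∑ i, G i := Finset.sum_le_sum (fun i _ => hFG i)
  have hle : entropicBound W ≤ infoNCE W S := by
    rw [hinfo, hent]
    have : -(1 / (n : ℝ)) * ∑ i, G i ≤ -(1 / (n : ℝ)) * ∑ i, F i := by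
      apply mul_le_mul_of_nonpos_left hsumFG
      simp only [neg_nonpos]
      positivity
    exact this
  refine ⟨hle, ?_, ?_⟩
  · -- equality → constant
    intro heq
    have hsumeq : ∑ i, F i = ∑ i, G i := by
      rw [hinfo, hent] at heq
      have hne0 : -(1 / (n : ℝ)) ≠ 0 := neg_ne_zero.2 (one_div_ne_zero hnpos.ne')
      exact mul_left_cancel₀ hne0 heq
    have hall : ∀ i, F i = G i := by
      intro i
      by_contra hne'
      have hlt : F i < G i := lt_of_le_of_ne (hFG i) hne'
      have : ∑ j, F j < ∑ j, G j :=
        Finset.sum_lt_sum (fun j _ => hFG j) ⟨i, Finset.mem_univ i, hlt⟩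
      linarith
    have hqp : ∀ i, ∀ j ∈ Finset.univ.erase i, q i j = p i j := by
      intro i
      exact ((hgibbs i).2).1 (hall i)
    -- derive S i j = log W i j + c i
    have hS : ∀ i j, i ≠ j → S i j = Real.log (W i j) + (Real.log (Z i) - Real.log (A i)) := by
      intro i j hij
      have hj : j ∈ Finset.univ.erase i := Finset.mem_erase.2 ⟨hij.symm, Finset.mem_univ j⟩
      have := hqp i j hj
      simp only [hq, hp] at this
      have hWij := hWpos i j hij
      have : Real.exp (S i j) = W i j / A i * Z i := by
        rw [div_eq_iff (hZpos i).ne'] at this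
        exact this
      have hlog := congrArg Real.log this
      rw [Real.log_exp] at hlog
      rw [hlog, Real.log_mul (div_pos hWij (hApos i)).ne' (hZpos i).ne',
        Real.log_div hWij.ne' (hApos i).ne']
      ring
    obtain ⟨i0, hi0⟩ : ∃ i0 : Fin n, True := ⟨⟨0, by omega⟩, trivial⟩
    refine ⟨Real.log (Z i0) - Real.log (A i0), ?_⟩
    intro i j hij
    by_cases hii : i = i0
    · rw [hii]; exact hS i0 j (hii ▸ hij)
    · -- c i = c i0 via the pair (i, i0)
      have h1 := hS i i0 hii
      have h2 := hS i0 i (Ne.symm hii)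
      have hWsym := hWs i0 i
      have hSsym := hSs i0 i
      have hc : Real.log (Z i) - Real.log (A i) = Real.log (Z i0) - Real.log (A i0) := by
        rw [← hSsym, ← hWsym, h1] at h2
        linarith
      rw [hS i j hij, hc]
  · -- constant → equality
    rintro ⟨c, hc⟩
    have hqp : ∀ i, ∀ j ∈ Finset.univ.erase i, q i j = p i j := by
      intro i j hj
      have hij : i ≠ j := Ne.symm (Finset.mem_erase.1 hj).1
      have hexp : ∀ k ∈ Finset.univ.erase i, Real.exp (S i k) = W i k * Real.exp c := by
        intro k hk
        have hik : i ≠ k := Ne.symm (Finset.mem_erase.1 hk).1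
        rw [hc i k hik, Real.exp_add, Real.exp_log (hWpos i k hik)]
      have hZ' : Z i = A i * Real.exp c := by
        simp only [hZ, hA]
        rw [Finset.sum_congr rfl hexp, ← Finset.sum_mul]
      simp only [hq, hp, hZ', hexp j hj]
      rw [mul_div_mul_right _ _ (Real.exp_pos c).ne']
    have hall : ∀ i, F i = G i := fun i => ((hgibbs i).2).2 (hqp i)
    rw [hinfo, hent]
    congr 1
    exact Finset.sum_congr rfl (fun i _ => hall i)
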